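/- Let f, g and h be entire functions given by everywhere absolutely convergent vector valued Dirichlet series, and let p ≥ 0, q ≥ 0, m ≥ 0 be integers. Assume 0 < λ_h^{(m,q)}(f) ≤ ρ_h^{(m,q)}(f) < +∞, and assume g is of regular relative (m,p) Ritt growth with respect to h with 0 < λ_h^{(m,p)}(g) = ρ_h^{(m,p)}(g) < +∞. Then λ_g^{(p,q)}(f) = λ_h^{(m,q)}(f)/ρ_h^{(m,p)}(g) and ρ_g^{(p,q)}(f) = ρ_h^{(m,q)}(f)/ρ_h^{(m,p)}(g). If in addition ρ_h^{(m,q)}(f) = ρ_h^{(m,p)}(g), then ρ_g^{(p,q)}(f) = λ_f^{(q,p)}(g) = 1. -/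

import Mathlib

open Filter Topology

noncomputable section

/-- An entire function given by an everywhere absolutely convergent
vector valued Dirichlet series, with coefficients in a Banach space `E`. -/
structure VVDS (E : Type*) [NormedAddCommGroup E] [NormedSpace ℂ E] [CompleteSpace E] where
  a : ℕ → E
  lam : ℕ → ℝ
  lam_pos : ∀ n, 0 < lam n
  lam_strictMono : StrictMono lam
  lam_tendsto : Tendsto lam atTop atTop
  log_index_bound : ∃ D : ℝ, ∀ᶠ n : ℕ in atTop, Real.log (n : ℝ) / lam n ≤ D
  coeff_decay : Tendsto (fun n => Real.log ‖a n‖ / lam n) atTop atBot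
  abs_conv : ∀ s : ℂ, Summable (fun n => Real.exp (s.re * lam n) * ‖a n‖)

variable {E F G : Type*} [NormedAddCommGroup E] [NormedSpace ℂ E] [CompleteSpace E]
  [NormedAddCommGroup F] [NormedSpace ℂ F] [CompleteSpace F]
  [NormedAddCommGroup G] [NormedSpace ℂ G] [CompleteSpace G]

/-- The entire function defined by the vector valued Dirichlet series. -/
def VVDS.toFun (f : VVDS E) (s : ℂ) : E := ∑' n, Complex.exp (s * (f.lam n : ℂ)) • f.a n

/-- The maximum modulus function `M_f(σ) = sup_t ‖f(σ+it)‖`. -/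
def VVDS.M (f : VVDS E) (σ : ℝ) : ℝ := ⨆ t : ℝ, ‖f.toFun ((σ : ℂ) + (t : ℂ) * Complex.I)‖

/-- The inverse function of the maximum modulus function. -/
def VVDS.Minv (f : VVDS E) (y : ℝ) : ℝ := sInf {σ : ℝ | y ≤ f.M σ}

/-- The (p,q)-th relative Ritt order of `f` with respect to `g`. -/
def relRittOrder (p q : ℕ) (f : VVDS E) (g : VVDS F) : EReal :=
  limsup (fun σ : ℝ =>
    ((Real.log^[p] (g.Minv (f.M σ)) / Real.log^[q] σ : ℝ) : EReal)) atTop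

/-- The (p,q)-th relative Ritt lower order of `f` with respect to `g`. -/
def relRittLowerOrder (p q : ℕ) (f : VVDS E) (g : VVDS F) : EReal :=
  liminf (fun σ : ℝ =>
    ((Real.log^[p] (g.Minv (f.M σ)) / Real.log^[q] σ : ℝ) : EReal)) atTop

/-- The (p,q)-th relative Ritt type of `f` with respect to `g`. -/
def relRittType (p q : ℕ) (f : VVDS E) (g : VVDS F) : EReal :=
  limsup (fun σ : ℝ =>
    ((Real.log^[p-1] (g.Minv (f.M σ)) /
      (Real.log^[q-1] σ) ^ (relRittOrder p q f g).toReal : ℝ) : EReal)) atTop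

/-- The (p,q)-th relative Ritt lower type of `f` with respect to `g`. -/
def relRittLowerType (p q : ℕ) (f : VVDS E) (g : VVDS F) : EReal :=
  liminf (fun σ : ℝ =>
    ((Real.log^[p-1] (g.Minv (f.M σ)) /
      (Real.log^[q-1] σ) ^ (relRittOrder p q f g).toReal : ℝ) : EReal)) atTop

/-- The (p,q)-th relative Ritt weak type of `f` with respect to `g`. -/
def relRittWeakType (p q : ℕ) (f : VVDS E) (g : VVDS F) : EReal :=
  liminf (fun σ : ℝ =>
    ((Real.log^[p-1] (g.Minv (f.M σ)) /
      (Real.log^[q-1] σ) ^ (relRittLowerOrder p q f g).toReal : ℝ) : EReal)) atTop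

/-- The growth indicator `τ̄_g^{(p,q)}(f)`. -/
def relRittUpperWeakType (p q : ℕ) (f : VVDS E) (g : VVDS F) : EReal :=
  limsup (fun σ : ℝ =>
    ((Real.log^[p-1] (g.Minv (f.M σ)) /
      (Real.log^[q-1] σ) ^ (relRittLowerOrder p q f g).toReal : ℝ) : EReal)) atTop

namespace VVDS

def A (f : VVDS E) (σ : ℝ) : ℝ := ∑' n, Real.exp (σ * f.lam n) * ‖f.a n‖

lemma summable_A (f : VVDS E) (σ : ℝ) :
    Summable (fun n => Real.exp (σ * f.lam n) * ‖f.a n‖) := by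
  simpa using f.abs_conv (σ : ℂ)

lemma norm_term (f : VVDS E) (s : ℂ) (n : ℕ) :
    ‖Complex.exp (s * (f.lam n : ℂ)) • f.a n‖ = Real.exp (s.re * f.lam n) * ‖f.a n‖ := by
  rw [norm_smul, Complex.norm_exp]
  congr 2
  simp [Complex.mul_re]

lemma summable_term (f : VVDS E) (s : ℂ) :
    Summable (fun n => Complex.exp (s * (f.lam n : ℂ)) • f.a n) := by
  apply Summable.of_norm
  simp only [f.norm_term s]
  exact f.summable_A s.re |>.congr (by simp)

lemma norm_toFun_le (f : VVDS E) (s : ℂ) : ‖f.toFun s‖ ≤ f.A s.re := by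
  refine le_trans (norm_tsum_le_tsum_norm ?_) ?_
  · simp only [f.norm_term s]
    exact f.summable_A s.re |>.congr (by simp)
  · simp only [f.norm_term s]
    exact le_of_eq rfl

lemma A_nonneg (f : VVDS E) (σ : ℝ) : 0 ≤ f.A σ :=
  tsum_nonneg fun n => mul_nonneg (Real.exp_pos _).le (norm_nonneg _)

lemma A_mono (f : VVDS E) : Monotone f.A := by
  intro σ₁ σ₂ h
  refine Summable.tsum_le_tsum (fun n => ?_) (f.summable_A σ₁) (f.summable_A σ₂)
  exact mul_le_mul_of_nonneg_right
    (Real.exp_le_exp.2 (mul_le_mul_of_nonneg_right h (f.lam_pos n).le)) (norm_nonneg _)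

lemma summable_norm_a (f : VVDS E) : Summable (fun n => ‖f.a n‖) := by
  simpa using f.summable_A 0

lemma A_zero (f : VVDS E) : f.A 0 = ∑' n, ‖f.a n‖ := by
  unfold A; simp

lemma exists_A_le (f : VVDS E) {ε : ℝ} (hε : 0 < ε) : ∃ σ₀ : ℝ, ∀ σ ≤ σ₀, f.A σ ≤ ε := by
  have hlam0 : 0 < f.lam 0 := f.lam_pos 0
  have hApos : 0 < f.A 0 + 1 := by linarith [f.A_nonneg 0]
  have hq : 0 < ε / (f.A 0 + 1) := div_pos hε hApos
  refine ⟨min 0 (Real.log (ε / (f.A 0 + 1)) / f.lam 0), fun σ hσ => ?_⟩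
  have hσ0 : σ ≤ 0 := hσ.trans (min_le_left _ _)
  have hσ1 : σ * f.lam 0 ≤ Real.log (ε / (f.A 0 + 1)) :=
    (le_div_iff₀ hlam0).1 (hσ.trans (min_le_right _ _))
  have hexp : Real.exp (σ * f.lam 0) ≤ ε / (f.A 0 + 1) := by
    calc Real.exp (σ * f.lam 0) ≤ Real.exp (Real.log (ε / (f.A 0 + 1))) :=
          Real.exp_le_exp.2 hσ1
      _ = ε / (f.A 0 + 1) := Real.exp_log hq
  have h1 : f.A σ ≤ Real.exp (σ * f.lam 0) * f.A 0 := by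
    rw [A_zero, ← tsum_mul_left]
    refine Summable.tsum_le_tsum (fun n => ?_) (f.summable_A σ) (f.summable_norm_a.mul_left _)
    refine mul_le_mul_of_nonneg_right (Real.exp_le_exp.2 ?_) (norm_nonneg _)
    have := f.lam_strictMono.monotone (Nat.zero_le n)
    nlinarith
  calc f.A σ ≤ Real.exp (σ * f.lam 0) * f.A 0 := h1
    _ ≤ (ε / (f.A 0 + 1)) * f.A 0 := by
        exact mul_le_mul_of_nonneg_right hexp (f.A_nonneg 0)
    _ ≤ ε := by
        rw [div_mul_eq_mul_div, div_le_iff₀ hApos]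
        nlinarith [f.A_nonneg 0]

lemma M_bddAbove (f : VVDS E) (σ : ℝ) :
    BddAbove (Set.range fun t : ℝ => ‖f.toFun ((σ : ℂ) + (t : ℂ) * Complex.I)‖) := by
  refine ⟨f.A σ, fun x ⟨t, ht⟩ => ?_⟩
  rw [← ht]
  simpa using f.norm_toFun_le ((σ : ℂ) + (t : ℂ) * Complex.I)

lemma M_le_A (f : VVDS E) (σ : ℝ) : f.M σ ≤ f.A σ := by
  refine ciSup_le fun t => ?_
  simpa using f.norm_toFun_le ((σ : ℂ) + (t : ℂ) * Complex.I)

lemma norm_le_M (f : VVDS E) (s : ℂ) : ‖f.toFun s‖ ≤ f.M s.re := by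
  have h : (s.re : ℂ) + (s.im : ℂ) * Complex.I = s := by
    apply Complex.ext <;> simp
  have := le_ciSup (f.M_bddAbove s.re) s.im
  rwa [h] at this

lemma M_nonneg (f : VVDS E) (σ : ℝ) : 0 ≤ f.M σ :=
  le_trans (norm_nonneg _) (le_ciSup (f.M_bddAbove σ) 0)

lemma bddBelow_M_set (f : VVDS E) {y : ℝ} (hy : 0 < y) : BddBelow {σ : ℝ | y ≤ f.M σ} := by
  obtain ⟨σ₀, hσ₀⟩ := f.exists_A_le (half_pos hy)
  refine ⟨σ₀, fun σ hσ => ?_⟩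
  by_contra hlt
  push_neg at hlt
  have := (hσ.trans (f.M_le_A σ)).trans (hσ₀ σ hlt.le)
  linarith

lemma differentiable_toFun (f : VVDS E) : Differentiable ℂ f.toFun := by
  intro s
  set R := s.re + 1 with hR
  have hopen : IsOpen {z : ℂ | z.re < R} := isOpen_lt Complex.continuous_re continuous_const
  have hsum : Summable (fun n => Real.exp (R * f.lam n) * ‖f.a n‖) := f.summable_A R
  have htu : TendstoUniformlyOn
      (fun (t : Finset ℕ) (z : ℂ) => ∑ n ∈ t, Complex.exp (z * (f.lam n : ℂ)) • f.a n)
      f.toFun atTop {z : ℂ | z.re < R} := by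
    refine tendstoUniformlyOn_tsum hsum fun n z hz => ?_
    rw [f.norm_term z]
    refine mul_le_mul_of_nonneg_right (Real.exp_le_exp.2 ?_) (norm_nonneg _)
    exact mul_le_mul_of_nonneg_right (le_of_lt hz) (f.lam_pos n).le
  have hdiff : DifferentiableOn ℂ f.toFun {z : ℂ | z.re < R} := by
    refine htu.tendstoLocallyUniformlyOn.differentiableOn
      (Eventually.of_forall fun t => ?_) hopen
    refine DifferentiableOn.fun_sum fun n _ => ?_
    exact (((differentiable_id.mul (differentiable_const _)).cexp).smul_const
      (f.a n)).differentiableOn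
  exact hdiff.differentiableAt (hopen.mem_nhds (by simp [hR]))

lemma M_mono (f : VVDS E) : Monotone f.M := by
  intro σ₁ σ₂ h12
  rcases eq_or_lt_of_le h12 with rfl | hlt
  · exact le_rfl
  refine ciSup_le fun t => ?_
  refine le_of_forall_pos_le_add fun ε hε => ?_
  obtain ⟨σ₀, hσ₀⟩ := f.exists_A_le hε
  set a := min σ₀ (σ₁ - 1) with ha
  have hab : a < σ₂ := lt_of_le_of_lt (min_le_right _ _) (by linarith)
  have key : ‖f.toFun ((σ₁ : ℂ) + (t : ℂ) * Complex.I)‖ ≤ f.M σ₂ + ε := by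
    refine PhragmenLindelof.vertical_strip (a := a) (b := σ₂)
      (f.differentiable_toFun.diffContOnCl) ?_ (fun z hz => ?_) (fun z hz => ?_) ?_ ?_
    · refine ⟨0, div_pos Real.pi_pos (by linarith), 0, ?_⟩
      rw [Asymptotics.isBigO_iff]
      refine ⟨f.A σ₂, ?_⟩
      rw [Filter.eventually_inf_principal]
      refine Eventually.of_forall fun z hz => ?_
      simp only [Real.norm_eq_abs]
      calc ‖f.toFun z‖ ≤ f.A z.re := f.norm_toFun_le z
        _ ≤ f.A σ₂ := f.A_mono hz.2.le
        _ ≤ f.A σ₂ * |Real.exp (0 * Real.exp (0 * |z.im|))| := by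
            simp
    · calc ‖f.toFun z‖ ≤ f.A z.re := f.norm_toFun_le z
        _ = f.A a := by rw [hz]
        _ ≤ ε := hσ₀ a (min_le_left _ _)
        _ ≤ f.M σ₂ + ε := by linarith [f.M_nonneg σ₂]
    · calc ‖f.toFun z‖ ≤ f.M z.re := f.norm_le_M z
        _ = f.M σ₂ := by rw [hz]
        _ ≤ f.M σ₂ + ε := by linarith
    · have hre : ((σ₁ : ℂ) + (t : ℂ) * Complex.I).re = σ₁ := by simp
      rw [hre]
      exact le_trans (min_le_right σ₀ (σ₁ - 1)) (by linarith)
    · have hre : ((σ₁ : ℂ) + (t : ℂ) * Complex.I).re = σ₁ := by simp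
      rw [hre]
      exact h12
  exact key

/-- Either `M` tends to infinity, or the function is identically zero. -/
lemma M_tendsto_or_zero (f : VVDS E) :
    Tendsto f.M atTop atTop ∨ ∀ σ, f.M σ = 0 := by
  by_cases hb : BddAbove (Set.range f.M)
  · right
    obtain ⟨B, hB⟩ := hb
    have hbd : Bornology.IsBounded (Set.range f.toFun) := by
      rw [Metric.isBounded_iff_subset_closedBall 0]
      refine ⟨B, ?_⟩
      rintro x ⟨s, rfl⟩
      simp only [Metric.mem_closedBall, dist_zero_right]
      exact (f.norm_le_M s).trans (hB ⟨s.re, rfl⟩)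
    have hconst : ∀ s : ℂ, f.toFun s = f.toFun 0 := fun s =>
      f.differentiable_toFun.apply_eq_apply_of_bounded hbd s 0
    have hzero : f.toFun 0 = 0 := by
      rw [← norm_le_zero_iff]
      refine le_of_forall_pos_le_add fun ε hε => ?_
      obtain ⟨σ₀, hσ₀⟩ := f.exists_A_le hε
      calc ‖f.toFun 0‖ = ‖f.toFun ((σ₀ : ℂ))‖ := by rw [hconst (σ₀ : ℂ)]
        _ ≤ f.A σ₀ := by simpa using f.norm_toFun_le (σ₀ : ℂ)
        _ ≤ ε := hσ₀ σ₀ le_rfl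
        _ = 0 + ε := by ring
    intro σ
    refine le_antisymm ?_ (f.M_nonneg σ)
    refine ciSup_le fun t => ?_
    rw [hconst _, hzero]
    simp
  · left
    refine tendsto_atTop_atTop.2 fun b => ?_
    have : ¬ ∀ x ∈ Set.range f.M, x ≤ b := fun hc => hb ⟨b, fun x hx => hc x hx⟩
    push_neg at this
    obtain ⟨x, ⟨σ₀, rfl⟩, hx⟩ := this
    exact ⟨σ₀, fun σ hσ => hx.le.trans (f.M_mono hσ)⟩

lemma nonempty_M_set (h : VVDS G) (hM : Tendsto h.M atTop atTop) (y : ℝ) :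
    {τ : ℝ | y ≤ h.M τ}.Nonempty := by
  obtain ⟨τ, hτ⟩ := (tendsto_atTop.1 hM y).exists
  exact ⟨τ, hτ⟩

lemma Minv_le (h : VVDS G) {y σ : ℝ} (hy : 0 < y) (hσ : y ≤ h.M σ) : h.Minv y ≤ σ :=
  csInf_le (h.bddBelow_M_set hy) hσ

lemma le_Minv (h : VVDS G) (hM : Tendsto h.M atTop atTop) {y b : ℝ}
    (hb : ∀ σ, y ≤ h.M σ → b ≤ σ) : b ≤ h.Minv y :=
  le_csInf (h.nonempty_M_set hM y) hb

lemma Minv_mono (h : VVDS G) (hM : Tendsto h.M atTop atTop) {y₁ y₂ : ℝ}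
    (h1 : 0 < y₁) (h12 : y₁ ≤ y₂) : h.Minv y₁ ≤ h.Minv y₂ :=
  csInf_le_csInf (h.bddBelow_M_set h1) (h.nonempty_M_set hM y₂)
    (fun σ hσ => le_trans h12 hσ)

/-- `Minv h ∘ y` tends to infinity whenever `y` does. -/
lemma Minv_comp_tendsto (h : VVDS G) (hM : Tendsto h.M atTop atTop) {α : Type*}
    {l : Filter α} {y : α → ℝ} (hy : Tendsto y l atTop) :
    Tendsto (fun x => h.Minv (y x)) l atTop := by
  refine tendsto_atTop.2 fun b => ?_
  filter_upwards [hy.eventually_ge_atTop (h.M b + 1)] with x hx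
  refine h.le_Minv hM fun σ hσ => ?_
  by_contra hlt
  push_neg at hlt
  have := (h.M_mono hlt.le).trans_lt (by linarith : h.M b < y x)
  exact absurd hσ (not_le.2 this)

lemma Minv_zero_of_nonpos (h : VVDS G) {y : ℝ} (hy : y ≤ 0) : h.Minv y = 0 := by
  have : {σ : ℝ | y ≤ h.M σ} = Set.univ := by
    ext σ; simpa using hy.trans (h.M_nonneg σ)
  rw [VVDS.Minv, this]
  refine Real.sInf_of_not_bddBelow fun ⟨b, hb⟩ => ?_
  have := hb (Set.mem_univ (b - 1))
  linarith

lemma Minv_of_empty (h : VVDS G) {y : ℝ} (hy : {σ : ℝ | y ≤ h.M σ} = ∅) : h.Minv y = 0 := by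
  rw [VVDS.Minv, hy, Real.sInf_empty]

end VVDS

lemma auxIterLog_zero (m : ℕ) : Real.log^[m] 0 = 0 := by
  induction m with
  | zero => rfl
  | succ m IH => rw [Function.iterate_succ_apply, Real.log_zero, IH]

/-! Iterated log/exp lemmas -/

lemma auxLe_iterExp : ∀ (m : ℕ) (x : ℝ), x ≤ Real.exp^[m] x := by
  intro m
  induction m with
  | zero => intro x; exact le_rfl
  | succ m IH =>
      intro x
      rw [Function.iterate_succ_apply']
      exact (IH x).trans (by linarith [Real.add_one_le_exp (Real.exp^[m] x)])

lemma auxIterLog_iterExp : ∀ (m : ℕ) (x : ℝ), Real.log^[m] (Real.exp^[m] x) = x := by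
  intro m
  induction m with
  | zero => intro x; rfl
  | succ m IH =>
      intro x
      rw [Function.iterate_succ_apply' (f := Real.exp), Function.iterate_succ_apply,
        Real.log_exp]
      exact IH x

lemma auxKey (m : ℕ) (c : ℝ) (hc : 1 ≤ c) :
    ∀ x y : ℝ, Real.exp^[m] c ≤ x → x ≤ y →
      c ≤ Real.log^[m] x ∧ Real.log^[m] x ≤ Real.log^[m] y := by
  induction m with
  | zero => intro x y hx hxy; exact ⟨hx, hxy⟩
  | succ m IH =>
      intro x y hx hxy
      rw [Function.iterate_succ_apply' (f := Real.exp)] at hx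
      have hx0 : 0 < x := lt_of_lt_of_le (Real.exp_pos _) hx
      have h1 : Real.exp^[m] c ≤ Real.log x := (Real.le_log_iff_exp_le hx0).2 hx
      have h2 : Real.log x ≤ Real.log y := Real.log_le_log hx0 hxy
      rw [Function.iterate_succ_apply, Function.iterate_succ_apply]
      exact IH (Real.log x) (Real.log y) h1 h2

lemma auxIterLog_tendsto (q : ℕ) : Tendsto (Real.log^[q]) atTop atTop := by
  induction q with
  | zero => exact tendsto_id
  | succ q IH =>
      rw [Function.iterate_succ]
      exact IH.comp Real.tendsto_log_atTop

/-! EReal helpers -/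

lemma auxEReal_eq_coe {x : EReal} {a : ℝ} (h1 : ∀ c : ℝ, c < a → (c : EReal) ≤ x)
    (h2 : ∀ c : ℝ, a < c → x ≤ (c : EReal)) : x = (a : EReal) := by
  refine le_antisymm ?_ ?_
  · by_contra hx
    push_neg at hx
    obtain ⟨c, hc1, hc2⟩ := EReal.lt_iff_exists_real_btwn.1 hx
    exact absurd (h2 c (by exact_mod_cast hc1)) (not_le.2 hc2)
  · by_contra hx
    push_neg at hx
    obtain ⟨c, hc1, hc2⟩ := EReal.lt_iff_exists_real_btwn.1 hx
    exact absurd (h1 c (by exact_mod_cast hc2)) (not_le.2 hc1)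

section ERealFilter

variable {fn : ℝ → ℝ} {c : ℝ}

lemma auxA1 (hc : (c : EReal) < liminf (fun σ : ℝ => ((fn σ : ℝ) : EReal)) atTop) :
    ∀ᶠ σ in atTop, c < fn σ := by
  filter_upwards [eventually_lt_of_lt_liminf hc] with σ hσ
  exact_mod_cast hσ

lemma auxA2 (hc : limsup (fun σ : ℝ => ((fn σ : ℝ) : EReal)) atTop < (c : EReal)) :
    ∀ᶠ σ in atTop, fn σ < c := by
  filter_upwards [eventually_lt_of_limsup_lt hc] with σ hσ
  exact_mod_cast hσ

lemma auxA3 (hc : liminf (fun σ : ℝ => ((fn σ : ℝ) : EReal)) atTop < (c : EReal)) :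
    ∃ᶠ σ in atTop, fn σ < c := by
  refine (frequently_lt_of_liminf_lt (by isBoundedDefault) hc).mono fun σ hσ => ?_
  exact_mod_cast hσ

lemma auxA4 (hc : (c : EReal) < limsup (fun σ : ℝ => ((fn σ : ℝ) : EReal)) atTop) :
    ∃ᶠ σ in atTop, c < fn σ := by
  refine (frequently_lt_of_lt_limsup (by isBoundedDefault) hc).mono fun σ hσ => ?_
  exact_mod_cast hσ

lemma auxB1 (hc : ∀ᶠ σ in atTop, c ≤ fn σ) :
    (c : EReal) ≤ liminf (fun σ : ℝ => ((fn σ : ℝ) : EReal)) atTop := by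
  refine le_liminf_of_le (by isBoundedDefault) ?_
  filter_upwards [hc] with σ hσ
  exact_mod_cast hσ

lemma auxB2 (hc : ∀ᶠ σ in atTop, fn σ ≤ c) :
    limsup (fun σ : ℝ => ((fn σ : ℝ) : EReal)) atTop ≤ (c : EReal) := by
  refine limsup_le_of_le (by isBoundedDefault) ?_
  filter_upwards [hc] with σ hσ
  exact_mod_cast hσ

lemma auxB3 (hc : ∃ᶠ σ in atTop, fn σ ≤ c) :
    liminf (fun σ : ℝ => ((fn σ : ℝ) : EReal)) atTop ≤ (c : EReal) := by
  refine liminf_le_of_frequently_le (hc.mono fun σ hσ => ?_) (by isBoundedDefault)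
  exact_mod_cast hσ

lemma auxB4 (hc : ∃ᶠ σ in atTop, c ≤ fn σ) :
    (c : EReal) ≤ limsup (fun σ : ℝ => ((fn σ : ℝ) : EReal)) atTop := by
  refine le_limsup_of_frequently_le (hc.mono fun σ hσ => ?_) (by isBoundedDefault)
  exact_mod_cast hσ

end ERealFilter

/-! Arithmetic helpers -/

lemma auxArith1 {c a r ε w u Lq : ℝ} (hε : 0 < ε) (hr : 0 < r)
    (hc : c < (a - ε)/(r + ε) - ε) (hw : (u - 1)/(r + ε) ≤ w) (hu : a - ε < u/Lq)
    (hLq : 1 ≤ Lq) (hE : 1/((r + ε)*ε) ≤ Lq) : c ≤ w/Lq := by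
  have hLq0 : 0 < Lq := lt_of_lt_of_le one_pos hLq
  have hrε : 0 < r + ε := by linarith
  rw [le_div_iff₀ hLq0]
  have h1 : (a - ε)*Lq < u := (lt_div_iff₀ hLq0).1 hu
  have h2 : 1 ≤ Lq*((r + ε)*ε) := (div_le_iff₀ (by positivity)).1 hE
  have h3 : (c + ε)*(r + ε) < a - ε := (lt_div_iff₀ hrε).1 (by linarith)
  have h4 : u - 1 ≤ w*(r + ε) := (div_le_iff₀ hrε).1 hw
  nlinarith [mul_le_mul_of_nonneg_right h3.le hLq0.le]

lemma auxArith2 {c a r ε w u Lq : ℝ} (hε : 0 < ε) (hεr : ε < r)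
    (hc : (a + ε)/(r - ε) + ε < c) (hw : w ≤ (u + 1)/(r - ε)) (hu : u/Lq < a + ε)
    (hLq : 1 ≤ Lq) (hE : 1/((r - ε)*ε) ≤ Lq) : w/Lq ≤ c := by
  have hLq0 : 0 < Lq := lt_of_lt_of_le one_pos hLq
  have hrε : 0 < r - ε := by linarith
  rw [div_le_iff₀ hLq0]
  have h1 : u < (a + ε)*Lq := (div_lt_iff₀ hLq0).1 hu
  have h2 : 1 ≤ Lq*((r - ε)*ε) := (div_le_iff₀ (by positivity)).1 hE
  have h3 : a + ε < (c - ε)*(r - ε) := (div_lt_iff₀ hrε).1 (by linarith)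
  have h4 : w*(r - ε) ≤ u + 1 := (le_div_iff₀ hrε).1 hw
  nlinarith [mul_le_mul_of_nonneg_right h3.le hLq0.le]

lemma auxArith3 {c r ε w Lp : ℝ} (hε : 0 < ε) (hεr : ε < r)
    (hc : c < (r - ε)/(r + ε) - ε) (hw : (r - ε)*Lp/(r + ε) - 1 ≤ w)
    (hLp : 1 ≤ Lp) (hE : 1/ε ≤ Lp) : c ≤ w/Lp := by
  have hLp0 : 0 < Lp := lt_of_lt_of_le one_pos hLp
  have hrε : 0 < r + ε := by linarith
  rw [le_div_iff₀ hLp0]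
  have h2 : 1 ≤ Lp*ε := (div_le_iff₀ hε).1 hE
  have h3 : (c + ε)*(r + ε) < r - ε := (lt_div_iff₀ hrε).1 (by linarith)
  have h4 : (r - ε)*Lp/(r + ε) = (r - ε)/(r + ε)*Lp := by ring
  have h5 : (r - ε)/(r + ε)*(r + ε) = r - ε := div_mul_cancel₀ _ hrε.ne'
  nlinarith [mul_le_mul_of_nonneg_right h3.le hLp0.le,
    mul_le_mul_of_nonneg_right h2 hrε.le, (div_le_iff₀ hrε).1 (le_refl ((r - ε)/(r + ε)))]

lemma auxArith4 {c r ε w Lq u : ℝ} (hε : 0 < ε) (hεr : ε < r)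
    (hc : (1 + ε)*(r + ε)/(r - ε) < c) (hw : w ≤ Lq) (hu : Lq*(r - ε) < u)
    (huε : (1 + ε)/ε ≤ u) (hu2 : 2 ≤ u) : w/((u - 1)/(r + ε)) ≤ c := by
  have hrε : 0 < r + ε := by linarith
  have hrε2 : 0 < r - ε := by linarith
  have hu1 : 0 < u - 1 := by linarith
  have hd : 0 < (u - 1)/(r + ε) := by positivity
  rw [div_le_iff₀ hd]
  have k1 : (1 + ε)*(r + ε) < c*(r - ε) := (div_lt_iff₀ hrε2).1 hc
  have k2 : 1 + ε ≤ u*ε := (div_le_iff₀ hε).1 huε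
  have k3 : u ≤ (1 + ε)*(u - 1) := by nlinarith
  -- w*(r+ε)*(r-ε) ≤ Lq*(r+ε)*(r-ε) < u*(r+ε) ≤ (1+ε)*(u-1)*(r+ε) ≤ c*(r-ε)*(u-1)
  have goal' : w*((r + ε)*(r - ε)) ≤ c*((u - 1)/(r + ε))*((r + ε)*(r - ε)) := by
    have e1 : c*((u - 1)/(r + ε))*((r + ε)*(r - ε)) = c*(r - ε)*(u - 1) := by
      field_simp
    rw [e1]
    nlinarith [mul_le_mul_of_nonneg_right hw (mul_pos hrε hrε2).le,
      mul_lt_mul_of_pos_right hu hrε, mul_le_mul_of_nonneg_right k3 hrε.le,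
      mul_le_mul_of_nonneg_right k1.le hu1.le]
  have hpos : 0 < (r + ε)*(r - ε) := mul_pos hrε hrε2
  exact le_of_mul_le_mul_right goal' hpos

/-! ε-extraction helpers -/

lemma auxEpsLow {a r c : ℝ} (hr : 0 < r) (hc : c < a / r) :
    ∃ ε : ℝ, 0 < ε ∧ ε < r ∧ c < (a - ε)/(r + ε) - ε := by
  have hcont : ContinuousAt (fun t : ℝ => (a - t)/(r + t) - t) 0 := by
    have h1 : ContinuousAt (fun t : ℝ => a - t) 0 := by fun_prop
    have h2 : ContinuousAt (fun t : ℝ => r + t) 0 := by fun_prop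
    exact (h1.div h2 (by simpa using hr.ne')).sub (continuousAt_id)
  have hφ : Tendsto (fun t : ℝ => (a - t)/(r + t) - t) (𝓝 0) (𝓝 (a/r)) := by
    simpa using hcont.tendsto
  have hev1 : ∀ᶠ t in 𝓝 (0:ℝ), c < (a - t)/(r + t) - t :=
    hφ.eventually (eventually_gt_nhds hc)
  have hev2 : ∀ᶠ t in 𝓝 (0:ℝ), t < r := eventually_lt_nhds hr
  have hev3 : ∀ᶠ t in 𝓝[>] (0:ℝ), (0 < t ∧ t < r) ∧ (c < (a - t)/(r + t) - t) := by
    filter_upwards [(hev1.and hev2).filter_mono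
      (nhdsWithin_le_nhds : 𝓝[>] (0:ℝ) ≤ 𝓝 0),
      (self_mem_nhdsWithin : ∀ᶠ t in 𝓝[>] (0:ℝ), t ∈ Set.Ioi 0)] with t h1 h2
    exact ⟨⟨h2, h1.2⟩, h1.1⟩
  obtain ⟨ε, ⟨hε0, hεr⟩, hεc⟩ := hev3.exists
  exact ⟨ε, hε0, hεr, hεc⟩

lemma auxEpsHigh {a r c : ℝ} (hr : 0 < r) (hc : a / r < c) :
    ∃ ε : ℝ, 0 < ε ∧ ε < r ∧ (a + ε)/(r - ε) + ε < c := by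
  have hcont : ContinuousAt (fun t : ℝ => (a + t)/(r - t) + t) 0 := by
    have h1 : ContinuousAt (fun t : ℝ => a + t) 0 := by fun_prop
    have h2 : ContinuousAt (fun t : ℝ => r - t) 0 := by fun_prop
    exact (h1.div h2 (by simpa using hr.ne')).add (continuousAt_id)
  have hφ : Tendsto (fun t : ℝ => (a + t)/(r - t) + t) (𝓝 0) (𝓝 (a/r)) := by
    simpa using hcont.tendsto
  have hev1 : ∀ᶠ t in 𝓝 (0:ℝ), (a + t)/(r - t) + t < c :=
    hφ.eventually (eventually_lt_nhds hc)
  have hev2 : ∀ᶠ t in 𝓝 (0:ℝ), t < r := eventually_lt_nhds hr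
  have hev3 : ∀ᶠ t in 𝓝[>] (0:ℝ), (0 < t ∧ t < r) ∧ ((a + t)/(r - t) + t < c) := by
    filter_upwards [(hev1.and hev2).filter_mono
      (nhdsWithin_le_nhds : 𝓝[>] (0:ℝ) ≤ 𝓝 0),
      (self_mem_nhdsWithin : ∀ᶠ t in 𝓝[>] (0:ℝ), t ∈ Set.Ioi 0)] with t h1 h2
    exact ⟨⟨h2, h1.2⟩, h1.1⟩
  obtain ⟨ε, ⟨hε0, hεr⟩, hεc⟩ := hev3.exists
  exact ⟨ε, hε0, hεr, hεc⟩

lemma auxEps4 {r c : ℝ} (hr : 0 < r) (hc : 1 < c) :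
    ∃ ε : ℝ, 0 < ε ∧ ε < r ∧ (1 + ε)*(r + ε)/(r - ε) < c := by
  have hcont : ContinuousAt (fun t : ℝ => (1 + t)*(r + t)/(r - t)) 0 := by
    have h1 : ContinuousAt (fun t : ℝ => (1 + t)*(r + t)) 0 := by fun_prop
    have h2 : ContinuousAt (fun t : ℝ => r - t) 0 := by fun_prop
    exact h1.div h2 (by simpa using hr.ne')
  have hφ : Tendsto (fun t : ℝ => (1 + t)*(r + t)/(r - t)) (𝓝 0) (𝓝 1) := by
    have h0 : (1 + (0:ℝ))*(r + 0)/(r - 0) = 1 := by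
      rw [add_zero, sub_zero, add_zero, one_mul, div_self hr.ne']
    have := hcont.tendsto
    simp only [h0] at this
    exact this
  have hev1 : ∀ᶠ t in 𝓝 (0:ℝ), (1 + t)*(r + t)/(r - t) < c :=
    hφ.eventually (eventually_lt_nhds hc)
  have hev2 : ∀ᶠ t in 𝓝 (0:ℝ), t < r := eventually_lt_nhds hr
  have hev3 : ∀ᶠ t in 𝓝[>] (0:ℝ), (0 < t ∧ t < r) ∧ ((1 + t)*(r + t)/(r - t) < c) := by
    filter_upwards [(hev1.and hev2).filter_mono
      (nhdsWithin_le_nhds : 𝓝[>] (0:ℝ) ≤ 𝓝 0),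
      (self_mem_nhdsWithin : ∀ᶠ t in 𝓝[>] (0:ℝ), t ∈ Set.Ioi 0)] with t h1 h2
    exact ⟨⟨h2, h1.2⟩, h1.1⟩
  obtain ⟨ε, ⟨hε0, hεr⟩, hεc⟩ := hev3.exists
  exact ⟨ε, hε0, hεr, hεc⟩


theorem stmt_2 (f : VVDS E) (g : VVDS F) (h : VVDS G) (p q m : ℕ)
    (hf1 : (0 : EReal) < relRittLowerOrder m q f h)
    (hf2 : relRittLowerOrder m q f h ≤ relRittOrder m q f h)
    (hf3 : relRittOrder m q f h < ⊤)
    (hg1 : (0 : EReal) < relRittLowerOrder m p g h)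
    (hgr : relRittLowerOrder m p g h = relRittOrder m p g h)
    (hg3 : relRittOrder m p g h < ⊤)
    :
    relRittLowerOrder p q f g = (((relRittLowerOrder m q f h).toReal / (relRittOrder m p g h).toReal : ℝ) : EReal) ∧ relRittOrder p q f g = (((relRittOrder m q f h).toReal / (relRittOrder m p g h).toReal : ℝ) : EReal) ∧ (relRittOrder m q f h = relRittOrder m p g h → relRittOrder p q f g = 1 ∧ relRittLowerOrder q p g f = 1) := by
  classical
  -- Step 0: the maximum modulus functions tend to infinity
  have hfM : Tendsto f.M atTop atTop := by
    rcases f.M_tendsto_or_zero with hT | hZ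
    · exact hT
    · exfalso
      have hzero : relRittLowerOrder m q f h = ((0 : ℝ) : EReal) := by
        unfold relRittLowerOrder
        have heq : (fun σ : ℝ =>
            ((Real.log^[m] (h.Minv (f.M σ)) / Real.log^[q] σ : ℝ) : EReal))
            = fun _ : ℝ => ((0 : ℝ) : EReal) := by
          funext σ
          rw [hZ σ, h.Minv_zero_of_nonpos le_rfl, auxIterLog_zero, zero_div]
        rw [heq, liminf_const]
      rw [hzero] at hf1
      simp at hf1
  have hgM : Tendsto g.M atTop atTop := by
    rcases g.M_tendsto_or_zero with hT | hZ
    · exact hT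
    · exfalso
      have hzero : relRittLowerOrder m p g h = ((0 : ℝ) : EReal) := by
        unfold relRittLowerOrder
        have heq : (fun σ : ℝ =>
            ((Real.log^[m] (h.Minv (g.M σ)) / Real.log^[p] σ : ℝ) : EReal))
            = fun _ : ℝ => ((0 : ℝ) : EReal) := by
          funext σ
          rw [hZ σ, h.Minv_zero_of_nonpos le_rfl, auxIterLog_zero, zero_div]
        rw [heq, liminf_const]
      rw [hzero] at hg1
      simp at hg1
  have hhM : Tendsto h.M atTop atTop := by
    rcases h.M_tendsto_or_zero with hT | hZ
    · exact hT
    · exfalso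
      have hev : ∀ᶠ σ : ℝ in atTop,
          ((Real.log^[m] (h.Minv (f.M σ)) / Real.log^[q] σ : ℝ) : EReal)
            = ((0 : ℝ) : EReal) := by
        filter_upwards [hfM.eventually_ge_atTop 1] with σ hσ
        have hemp : {τ : ℝ | f.M σ ≤ h.M τ} = ∅ := by
          ext τ
          simp only [Set.mem_setOf_eq, Set.mem_empty_iff_false, iff_false, not_le]
          rw [hZ τ]; linarith
        rw [h.Minv_of_empty hemp, auxIterLog_zero, zero_div]
      have hzero : relRittLowerOrder m q f h = ((0 : ℝ) : EReal) := by
        unfold relRittLowerOrder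
        rw [liminf_congr hev, liminf_const]
      rw [hzero] at hf1
      simp at hf1
  -- Step 1: real constants
  have hLne2 : relRittLowerOrder m q f h ≠ ⊥ :=
    ((EReal.bot_lt_coe 0).trans_le (by rw [EReal.coe_zero]; exact hf1.le)).ne'
  have hLne1 : relRittLowerOrder m q f h ≠ ⊤ := (lt_of_le_of_lt hf2 hf3).ne
  set L := (relRittLowerOrder m q f h).toReal with hLdef
  have hLcoe : ((L : ℝ) : EReal) = relRittLowerOrder m q f h := EReal.coe_toReal hLne1 hLne2
  have hLpos : 0 < L := by
    have h0 := hf1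
    rw [← hLcoe] at h0
    exact_mod_cast h0
  have hRne2 : relRittOrder m q f h ≠ ⊥ :=
    ((EReal.bot_lt_coe 0).trans_le
      (le_trans (by rw [EReal.coe_zero]; exact hf1.le) hf2)).ne'
  have hRne1 : relRittOrder m q f h ≠ ⊤ := hf3.ne
  set R := (relRittOrder m q f h).toReal with hRdef
  have hRcoe : ((R : ℝ) : EReal) = relRittOrder m q f h := EReal.coe_toReal hRne1 hRne2
  have hRpos : 0 < R := by
    have h0 := lt_of_lt_of_le hf1 hf2
    rw [← hRcoe] at h0
    exact_mod_cast h0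
  have hg1' : (0 : EReal) < relRittOrder m p g h := hgr ▸ hg1
  have hrne2 : relRittOrder m p g h ≠ ⊥ :=
    ((EReal.bot_lt_coe 0).trans_le (by rw [EReal.coe_zero]; exact hg1'.le)).ne'
  have hrne1 : relRittOrder m p g h ≠ ⊤ := hg3.ne
  set r := (relRittOrder m p g h).toReal with hrdef
  have hrcoe : ((r : ℝ) : EReal) = relRittOrder m p g h := EReal.coe_toReal hrne1 hrne2
  have hrcoe' : ((r : ℝ) : EReal) = relRittLowerOrder m p g h := by rw [hgr]; exact hrcoe
  have hrpos : 0 < r := by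
    have h0 := hg1'
    rw [← hrcoe] at h0
    exact_mod_cast h0
  -- Step 2: tendsto facts
  have hXt : Tendsto (fun σ => h.Minv (f.M σ)) atTop atTop := h.Minv_comp_tendsto hhM hfM
  have hYt : Tendsto (fun σ' => h.Minv (g.M σ')) atTop atTop := h.Minv_comp_tendsto hhM hgM
  have hZt : Tendsto (fun σ => g.Minv (f.M σ)) atTop atTop := g.Minv_comp_tendsto hgM hfM
  have hWt : Tendsto (fun σ' => f.Minv (g.M σ')) atTop atTop := f.Minv_comp_tendsto hfM hgM
  have hut : Tendsto (fun σ => Real.log^[m] (h.Minv (f.M σ))) atTop atTop :=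
    (auxIterLog_tendsto m).comp hXt
  have hLqt : Tendsto (Real.log^[q]) atTop atTop := auxIterLog_tendsto q
  have hLpt : Tendsto (Real.log^[p]) atTop atTop := auxIterLog_tendsto p
  -- Step 3: the sandwich
  have sandwich : ∀ ε : ℝ, 0 < ε → ε < r →
      ∀ᶠ σ in atTop,
        Real.log^[p] (g.Minv (f.M σ))
            ≤ (Real.log^[m] (h.Minv (f.M σ)) + 1) / (r - ε) ∧
        (Real.log^[m] (h.Minv (f.M σ)) - 1) / (r + ε)
            ≤ Real.log^[p] (g.Minv (f.M σ)) := by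
    intro ε hε0 hεr
    have hrε1 : 0 < r - ε := by linarith
    have hrε2 : 0 < r + ε := by linarith
    -- the events in the auxiliary variable
    have hv1 : ∀ᶠ σ' in atTop,
        (r - ε) * Real.log^[p] σ' < Real.log^[m] (h.Minv (g.M σ')) ∧
        Real.log^[m] (h.Minv (g.M σ')) < (r + ε) * Real.log^[p] σ' := by
      have e1 : ∀ᶠ σ' in atTop,
          r - ε < Real.log^[m] (h.Minv (g.M σ')) / Real.log^[p] σ' := by
        refine auxA1 ?_
        show ((r - ε : ℝ) : EReal) < relRittLowerOrder m p g h
        rw [← hrcoe']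
        exact_mod_cast sub_lt_self r hε0
      have e2 : ∀ᶠ σ' in atTop,
          Real.log^[m] (h.Minv (g.M σ')) / Real.log^[p] σ' < r + ε := by
        refine auxA2 ?_
        show relRittOrder m p g h < ((r + ε : ℝ) : EReal)
        rw [← hrcoe]
        exact_mod_cast lt_add_of_pos_right r hε0
      filter_upwards [e1, e2, hLpt.eventually_ge_atTop 1] with σ' h1 h2 h3
      have hLp0 : 0 < Real.log^[p] σ' := lt_of_lt_of_le one_pos h3
      exact ⟨(lt_div_iff₀ hLp0).1 h1, (div_lt_iff₀ hLp0).1 h2⟩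
    have hσ'ev : ∀ᶠ σ' in atTop,
        ((r - ε) * Real.log^[p] σ' < Real.log^[m] (h.Minv (g.M σ')) ∧
          Real.log^[m] (h.Minv (g.M σ')) < (r + ε) * Real.log^[p] σ') ∧
        1 ≤ Real.log^[p] σ' ∧ Real.exp^[p] 1 ≤ σ' ∧ 1 ≤ g.M σ' ∧
        Real.exp^[m] 1 ≤ h.Minv (g.M σ') := by
      filter_upwards [hv1, hLpt.eventually_ge_atTop 1,
        eventually_ge_atTop (Real.exp^[p] 1), hgM.eventually_ge_atTop 1,
        hYt.eventually_ge_atTop (Real.exp^[m] 1)] with σ' a1 a2 a3 a4 a5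
      exact ⟨a1, a2, a3, a4, a5⟩
    obtain ⟨S0, hS0⟩ := eventually_atTop.1 hσ'ev
    filter_upwards [hfM.eventually_ge_atTop (g.M S0 + 1), hfM.eventually_ge_atTop 1,
      hXt.eventually_ge_atTop (Real.exp^[m] 1), hZt.eventually_ge_atTop (Real.exp^[p] 1),
      hut.eventually_ge_atTop ((r - ε) * S0), hut.eventually_ge_atTop (r + ε + 2)]
      with σ hf5 hfm1 hf2e hf3e hf4a hf4b
    have hfM0 : 0 < f.M σ := lt_of_lt_of_le one_pos hfm1
    -- upper bound
    set sstar := Real.exp^[p] ((Real.log^[m] (h.Minv (f.M σ)) + 1) / (r - ε)) with hsstardef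
    have hargS0 : S0 ≤ (Real.log^[m] (h.Minv (f.M σ)) + 1) / (r - ε) := by
      rw [le_div_iff₀ hrε1]; linarith
    have hsstar : S0 ≤ sstar := hargS0.trans (auxLe_iterExp p _)
    obtain ⟨⟨hv1s, hv2s⟩, hLp1s, he3s, he4s, he5s⟩ := hS0 sstar hsstar
    have hLpstar : Real.log^[p] sstar
        = (Real.log^[m] (h.Minv (f.M σ)) + 1) / (r - ε) := auxIterLog_iterExp p _
    have hvstar : Real.log^[m] (h.Minv (f.M σ)) + 1 ≤ Real.log^[m] (h.Minv (g.M sstar)) := by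
      rw [hLpstar, mul_div_cancel₀ _ hrε1.ne'] at hv1s
      exact hv1s.le
    have hge : f.M σ ≤ g.M sstar := by
      by_contra hlt
      push_neg at hlt
      have h1 : h.Minv (g.M sstar) ≤ h.Minv (f.M σ) :=
        h.Minv_mono hhM (lt_of_lt_of_le one_pos he4s) hlt.le
      have h2 := (auxKey m 1 le_rfl _ _ he5s h1).2
      linarith
    have hZle : g.Minv (f.M σ) ≤ sstar := g.Minv_le hfM0 hge
    have hupper : Real.log^[p] (g.Minv (f.M σ))
        ≤ (Real.log^[m] (h.Minv (f.M σ)) + 1) / (r - ε) := by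
      have hk := (auxKey p 1 le_rfl _ _ hf3e hZle).2
      rwa [hLpstar] at hk
    -- lower bound
    have hc1 : 1 ≤ (Real.log^[m] (h.Minv (f.M σ)) - 1) / (r + ε) := by
      rw [le_div_iff₀ hrε2]; linarith
    have hS : ∀ σ'', f.M σ ≤ g.M σ'' →
        Real.exp^[p] ((Real.log^[m] (h.Minv (f.M σ)) - 1) / (r + ε)) ≤ σ'' := by
      intro σ'' hmem
      have hSS'' : S0 ≤ σ'' := by
        by_contra hcon
        push_neg at hcon
        have := hmem.trans (g.M_mono hcon.le)
        linarith
      obtain ⟨⟨hv1'', hv2''⟩, hLp1'', he3'', he4'', he5''⟩ := hS0 σ'' hSS''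
      have h1 : h.Minv (f.M σ) ≤ h.Minv (g.M σ'') := h.Minv_mono hhM hfM0 hmem
      have h2 : Real.log^[m] (h.Minv (f.M σ)) ≤ Real.log^[m] (h.Minv (g.M σ'')) :=
        (auxKey m 1 le_rfl _ _ hf2e h1).2
      by_contra hcon
      push_neg at hcon
      have h4 : Real.log^[p] σ''
          ≤ (Real.log^[m] (h.Minv (f.M σ)) - 1) / (r + ε) := by
        have hk := (auxKey p 1 le_rfl σ'' _ he3'' hcon.le).2
        rwa [auxIterLog_iterExp] at hk
      have h5 : Real.log^[p] σ'' * (r + ε) ≤ Real.log^[m] (h.Minv (f.M σ)) - 1 := by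
        have hk := mul_le_mul_of_nonneg_right h4 hrε2.le
        rwa [div_mul_cancel₀ _ hrε2.ne'] at hk
      nlinarith
    have hZge : Real.exp^[p] ((Real.log^[m] (h.Minv (f.M σ)) - 1) / (r + ε))
        ≤ g.Minv (f.M σ) := g.le_Minv hgM hS
    have hlower : (Real.log^[m] (h.Minv (f.M σ)) - 1) / (r + ε)
        ≤ Real.log^[p] (g.Minv (f.M σ)) :=
      (auxKey p _ hc1 _ _ hZge le_rfl).1
    exact ⟨hupper, hlower⟩
  have hLq1 : ∀ᶠ σ in atTop, 1 ≤ Real.log^[q] σ := hLqt.eventually_ge_atTop 1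
  -- Goal A : the lower order
  have goalA : relRittLowerOrder p q f g = ((L / r : ℝ) : EReal) := by
    refine auxEReal_eq_coe ?_ ?_
    · intro c hc
      obtain ⟨ε, hε0, hεr, hεc⟩ := auxEpsLow hrpos (by exact hc : c < L / r)
      have hA1 : ∀ᶠ σ in atTop,
          L - ε < Real.log^[m] (h.Minv (f.M σ)) / Real.log^[q] σ := by
        refine auxA1 ?_
        show ((L - ε : ℝ) : EReal) < relRittLowerOrder m q f h
        rw [← hLcoe]
        exact_mod_cast sub_lt_self L hε0
      refine auxB1 ?_
      filter_upwards [sandwich ε hε0 hεr, hA1, hLq1,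
        hLqt.eventually_ge_atTop (1/((r + ε)*ε))] with σ hs hA hq1 hq2
      exact auxArith1 hε0 hrpos hεc hs.2 hA hq1 hq2
    · intro c hc
      obtain ⟨ε, hε0, hεr, hεc⟩ := auxEpsHigh hrpos (by exact hc : L / r < c)
      have hA3 : ∃ᶠ σ in atTop,
          Real.log^[m] (h.Minv (f.M σ)) / Real.log^[q] σ < L + ε := by
        refine auxA3 ?_
        show relRittLowerOrder m q f h < ((L + ε : ℝ) : EReal)
        rw [← hLcoe]
        exact_mod_cast lt_add_of_pos_right L hε0
      refine auxB3 ?_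
      have hEv : ∀ᶠ σ in atTop,
          (Real.log^[p] (g.Minv (f.M σ))
              ≤ (Real.log^[m] (h.Minv (f.M σ)) + 1) / (r - ε) ∧
            (Real.log^[m] (h.Minv (f.M σ)) - 1) / (r + ε)
              ≤ Real.log^[p] (g.Minv (f.M σ))) ∧
          1 ≤ Real.log^[q] σ ∧ 1/((r - ε)*ε) ≤ Real.log^[q] σ := by
        filter_upwards [sandwich ε hε0 hεr, hLq1,
          hLqt.eventually_ge_atTop (1/((r - ε)*ε))] with σ h1 h2 h3
        exact ⟨h1, h2, h3⟩
      refine (hA3.and_eventually hEv).mono ?_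
      rintro σ ⟨hA, hs, hq1, hq2⟩
      exact auxArith2 hε0 hεr hεc hs.1 hA hq1 hq2
  -- Goal B : the order
  have goalB : relRittOrder p q f g = ((R / r : ℝ) : EReal) := by
    refine auxEReal_eq_coe ?_ ?_
    · intro c hc
      obtain ⟨ε, hε0, hεr, hεc⟩ := auxEpsLow hrpos (by exact hc : c < R / r)
      have hA4 : ∃ᶠ σ in atTop,
          R - ε < Real.log^[m] (h.Minv (f.M σ)) / Real.log^[q] σ := by
        refine auxA4 ?_
        show ((R - ε : ℝ) : EReal) < relRittOrder m q f h
        rw [← hRcoe]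
        exact_mod_cast sub_lt_self R hε0
      refine auxB4 ?_
      have hEv : ∀ᶠ σ in atTop,
          (Real.log^[p] (g.Minv (f.M σ))
              ≤ (Real.log^[m] (h.Minv (f.M σ)) + 1) / (r - ε) ∧
            (Real.log^[m] (h.Minv (f.M σ)) - 1) / (r + ε)
              ≤ Real.log^[p] (g.Minv (f.M σ))) ∧
          1 ≤ Real.log^[q] σ ∧ 1/((r + ε)*ε) ≤ Real.log^[q] σ := by
        filter_upwards [sandwich ε hε0 hεr, hLq1,
          hLqt.eventually_ge_atTop (1/((r + ε)*ε))] with σ h1 h2 h3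
        exact ⟨h1, h2, h3⟩
      refine (hA4.and_eventually hEv).mono ?_
      rintro σ ⟨hA, hs, hq1, hq2⟩
      exact auxArith1 hε0 hrpos hεc hs.2 hA hq1 hq2
    · intro c hc
      obtain ⟨ε, hε0, hεr, hεc⟩ := auxEpsHigh hrpos (by exact hc : R / r < c)
      have hA2 : ∀ᶠ σ in atTop,
          Real.log^[m] (h.Minv (f.M σ)) / Real.log^[q] σ < R + ε := by
        refine auxA2 ?_
        show relRittOrder m q f h < ((R + ε : ℝ) : EReal)
        rw [← hRcoe]
        exact_mod_cast lt_add_of_pos_right R hε0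
      refine auxB2 ?_
      filter_upwards [sandwich ε hε0 hεr, hA2, hLq1,
        hLqt.eventually_ge_atTop (1/((r - ε)*ε))] with σ hs hA hq1 hq2
      exact auxArith2 hε0 hεr hεc hs.1 hA hq1 hq2
  refine ⟨goalA, goalB, ?_⟩
  intro hEq
  have hRr : R = r := by rw [hRdef, hrdef, hEq]
  constructor
  · rw [goalB, hRr, div_self hrpos.ne']
    exact EReal.coe_one
  · -- relRittLowerOrder q p g f = 1
    rw [show (1 : EReal) = ((1 : ℝ) : EReal) from EReal.coe_one.symm]
    have hLp1 : ∀ᶠ σ' in atTop, 1 ≤ Real.log^[p] σ' := hLpt.eventually_ge_atTop 1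
    refine auxEReal_eq_coe ?_ ?_
    · -- lower bound : ∀ c < 1
      intro c hc
      obtain ⟨ε, hε0, hεr, hεc⟩ := auxEpsLow hrpos
        (by rw [div_self hrpos.ne']; exact hc : c < r / r)
      have hrε1 : 0 < r - ε := by linarith
      have hrε2 : 0 < r + ε := by linarith
      -- σ-side events
      have hs1 : ∀ᶠ σ in atTop,
          Real.log^[m] (h.Minv (f.M σ)) < (r + ε) * Real.log^[q] σ := by
        have e2 : ∀ᶠ σ in atTop,
            Real.log^[m] (h.Minv (f.M σ)) / Real.log^[q] σ < r + ε := by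
          refine auxA2 ?_
          show relRittOrder m q f h < ((r + ε : ℝ) : EReal)
          rw [← hRcoe, hRr]
          exact_mod_cast lt_add_of_pos_right r hε0
        filter_upwards [e2, hLq1] with σ h1 h2
        have hLq0 : 0 < Real.log^[q] σ := lt_of_lt_of_le one_pos h2
        have := (div_lt_iff₀ hLq0).1 h1
        linarith [mul_comm (Real.log^[q] σ) (r + ε)]
      have hσev : ∀ᶠ σ in atTop,
          Real.log^[m] (h.Minv (f.M σ)) < (r + ε) * Real.log^[q] σ ∧
          Real.exp^[q] 1 ≤ σ ∧ 1 ≤ f.M σ ∧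
          Real.exp^[m] 1 ≤ h.Minv (f.M σ) := by
        filter_upwards [hs1, eventually_ge_atTop (Real.exp^[q] 1),
          hfM.eventually_ge_atTop 1, hXt.eventually_ge_atTop (Real.exp^[m] 1)]
          with σ a1 a2 a3 a4
        exact ⟨a1, a2, a3, a4⟩
      obtain ⟨S1, hS1⟩ := eventually_atTop.1 hσev
      -- σ'-side events
      have ht4 : ∀ᶠ σ' in atTop,
          (r - ε) * Real.log^[p] σ' < Real.log^[m] (h.Minv (g.M σ')) := by
        have e1 : ∀ᶠ σ' in atTop,
            r - ε < Real.log^[m] (h.Minv (g.M σ')) / Real.log^[p] σ' := by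
          refine auxA1 ?_
          show ((r - ε : ℝ) : EReal) < relRittLowerOrder m p g h
          rw [← hrcoe']
          exact_mod_cast sub_lt_self r hε0
        filter_upwards [e1, hLp1] with σ' h1 h2
        exact (lt_div_iff₀ (lt_of_lt_of_le one_pos h2)).1 h1
      refine auxB1 ?_
      filter_upwards [ht4, hgM.eventually_ge_atTop (f.M S1 + 1),
        hgM.eventually_ge_atTop 1, hYt.eventually_ge_atTop (Real.exp^[m] 1), hLp1,
        hLpt.eventually_ge_atTop (2*(r + ε)/(r - ε)),
        hLpt.eventually_ge_atTop (1/ε)] with σ' t4 t1 t2 t3 t5 t6 t7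
      -- every σ with g.M σ' ≤ f.M σ is at least exp^[q] (d - 1)
      have hd2 : 2 ≤ (r - ε) * Real.log^[p] σ' / (r + ε) := by
        rw [le_div_iff₀ hrε2]
        have := (div_le_iff₀ hrε1).1 t6
        linarith [mul_comm (Real.log^[p] σ') (r - ε)]
      have hSt : ∀ σ, g.M σ' ≤ f.M σ →
          Real.exp^[q] ((r - ε) * Real.log^[p] σ' / (r + ε) - 1) ≤ σ := by
        intro σ hmem
        have hσS1 : S1 ≤ σ := by
          by_contra hcon
          push_neg at hcon
          have := hmem.trans (f.M_mono hcon.le)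
          linarith
        obtain ⟨a1, a2, a3, a4⟩ := hS1 σ hσS1
        have h1 : h.Minv (g.M σ') ≤ h.Minv (f.M σ) :=
          h.Minv_mono hhM (lt_of_lt_of_le one_pos t2) hmem
        have h2 : Real.log^[m] (h.Minv (g.M σ')) ≤ Real.log^[m] (h.Minv (f.M σ)) :=
          (auxKey m 1 le_rfl _ _ t3 h1).2
        have hd : (r - ε) * Real.log^[p] σ' / (r + ε) < Real.log^[q] σ := by
          rw [div_lt_iff₀ hrε2]
          linarith [mul_comm (Real.log^[q] σ) (r + ε)]
        by_contra hcon
        push_neg at hcon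
        have h4 : Real.log^[q] σ ≤ (r - ε) * Real.log^[p] σ' / (r + ε) - 1 := by
          have hk := (auxKey q 1 le_rfl σ _ a2 hcon.le).2
          rwa [auxIterLog_iterExp] at hk
        linarith
      have hWge : Real.exp^[q] ((r - ε) * Real.log^[p] σ' / (r + ε) - 1)
          ≤ f.Minv (g.M σ') := f.le_Minv hfM hSt
      have hw : (r - ε) * Real.log^[p] σ' / (r + ε) - 1
          ≤ Real.log^[q] (f.Minv (g.M σ')) :=
        (auxKey q _ (by linarith) _ _ hWge le_rfl).1
      exact auxArith3 hε0 hεr hεc hw t5 t7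
    · -- upper bound : ∀ c > 1
      intro c hc
      obtain ⟨ε, hε0, hεr, hεc⟩ := auxEps4 hrpos hc
      have hrε1 : 0 < r - ε := by linarith
      have hrε2 : 0 < r + ε := by linarith
      -- σ'-side events
      have ht4' : ∀ᶠ σ' in atTop,
          Real.log^[m] (h.Minv (g.M σ')) < (r + ε) * Real.log^[p] σ' := by
        have e2 : ∀ᶠ σ' in atTop,
            Real.log^[m] (h.Minv (g.M σ')) / Real.log^[p] σ' < r + ε := by
          refine auxA2 ?_
          show relRittOrder m p g h < ((r + ε : ℝ) : EReal)
          rw [← hrcoe]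
          exact_mod_cast lt_add_of_pos_right r hε0
        filter_upwards [e2, hLp1] with σ' h1 h2
        have hLp0 : 0 < Real.log^[p] σ' := lt_of_lt_of_le one_pos h2
        have := (div_lt_iff₀ hLp0).1 h1
        linarith [mul_comm (Real.log^[p] σ') (r + ε)]
      have hσ'ev : ∀ᶠ σ' in atTop,
          Real.log^[m] (h.Minv (g.M σ')) < (r + ε) * Real.log^[p] σ' ∧
          1 ≤ g.M σ' ∧ Real.exp^[m] 1 ≤ h.Minv (g.M σ') ∧
          Real.exp^[q] 1 ≤ f.Minv (g.M σ') := by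
        filter_upwards [ht4', hgM.eventually_ge_atTop 1,
          hYt.eventually_ge_atTop (Real.exp^[m] 1),
          hWt.eventually_ge_atTop (Real.exp^[q] 1)] with σ' a1 a2 a3 a4
        exact ⟨a1, a2, a3, a4⟩
      obtain ⟨S2, hS2⟩ := eventually_atTop.1 hσ'ev
      -- σ-side frequent event
      have hFr : ∃ᶠ σ in atTop, (r - ε) * Real.log^[q] σ < Real.log^[m] (h.Minv (f.M σ)) := by
        have e4 : ∃ᶠ σ in atTop,
            r - ε < Real.log^[m] (h.Minv (f.M σ)) / Real.log^[q] σ := by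
          refine auxA4 ?_
          show ((r - ε : ℝ) : EReal) < relRittOrder m q f h
          rw [← hRcoe, hRr]
          exact_mod_cast sub_lt_self r hε0
        refine (e4.and_eventually hLq1).mono ?_
        rintro σ ⟨h1, h2⟩
        exact (lt_div_iff₀ (lt_of_lt_of_le one_pos h2)).1 h1
      refine auxB3 ?_
      rw [Filter.frequently_atTop]
      intro b
      have hσev : ∀ᶠ σ in atTop,
          1 ≤ f.M σ ∧ Real.exp^[m] 1 ≤ h.Minv (f.M σ) ∧
          (1 + ε)/ε ≤ Real.log^[m] (h.Minv (f.M σ)) ∧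
          2 ≤ Real.log^[m] (h.Minv (f.M σ)) ∧
          (r + ε) * (max S2 b) + 1 ≤ Real.log^[m] (h.Minv (f.M σ)) := by
        filter_upwards [hfM.eventually_ge_atTop 1,
          hXt.eventually_ge_atTop (Real.exp^[m] 1),
          hut.eventually_ge_atTop ((1 + ε)/ε),
          hut.eventually_ge_atTop 2,
          hut.eventually_ge_atTop ((r + ε) * (max S2 b) + 1)] with σ a1 a2 a3 a4 a5
        exact ⟨a1, a2, a3, a4, a5⟩
      obtain ⟨σ, hσF, ha1, ha2, ha3, ha4, ha5⟩ := (hFr.and_eventually hσev).exists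
      set σ' := Real.exp^[p] ((Real.log^[m] (h.Minv (f.M σ)) - 1) / (r + ε)) with hσ'def
      have hσ'arg : max S2 b ≤ (Real.log^[m] (h.Minv (f.M σ)) - 1) / (r + ε) := by
        rw [le_div_iff₀ hrε2]
        linarith [mul_comm (max S2 b) (r + ε)]
      have hσ'ge : max S2 b ≤ σ' := hσ'arg.trans (auxLe_iterExp p _)
      obtain ⟨t4', t2', t3', t9'⟩ := hS2 σ' (le_trans (le_max_left _ _) hσ'ge)
      have hLpσ' : Real.log^[p] σ'
          = (Real.log^[m] (h.Minv (f.M σ)) - 1) / (r + ε) := auxIterLog_iterExp p _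
      have hv : Real.log^[m] (h.Minv (g.M σ')) < Real.log^[m] (h.Minv (f.M σ)) - 1 := by
        rw [hLpσ', mul_div_cancel₀ _ hrε2.ne'] at t4'
        exact t4'
      have hge : g.M σ' ≤ f.M σ := by
        by_contra hcon
        push_neg at hcon
        have h1 : h.Minv (f.M σ) ≤ h.Minv (g.M σ') :=
          h.Minv_mono hhM (lt_of_lt_of_le one_pos ha1) hcon.le
        have h2 := (auxKey m 1 le_rfl _ _ ha2 h1).2
        linarith
      have hWle : f.Minv (g.M σ') ≤ σ := f.Minv_le (lt_of_lt_of_le one_pos t2') hge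
      have hw' : Real.log^[q] (f.Minv (g.M σ')) ≤ Real.log^[q] σ :=
        (auxKey q 1 le_rfl _ _ t9' hWle).2
      refine ⟨σ', le_trans (le_max_right _ _) hσ'ge, ?_⟩
      rw [hLpσ']
      refine auxArith4 hε0 hεr hεc hw' ?_ ha3 ha4
      linarith [mul_comm (r - ε) (Real.log^[q] σ)]
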